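/- If A is a right hereditary, right noetherian ring and A → R a ring homomorphism, then the canonical map ζ : R° → R* from the finite dual coring to the right dual of R is injective. -/

import Mathlib

open MulOpposite

universe u

variable (A R : Type u) [Ring A] [Ring R] (φ : A →+* R)

/-- An object of the category `𝒜_R`: a right `R`-module (encoded as a module
over `Rᵐᵒᵖ`) which, via restriction of scalars along `φ`, is finitely generated
and projective as a right `A`-module. -/
structure FDObj : Type (u + 1) where
  carrier : Type u
  [acg : AddCommGroup carrier]
  [modR : Module Rᵐᵒᵖ carrier]
  [modA : Module Aᵐᵒᵖ carrier]
  compat : ∀ (a : Aᵐᵒᵖ) (x : carrier), a • x = (RingHom.op φ a) • x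
  fin : Module.Finite Aᵐᵒᵖ carrier
  proj : Module.Projective Aᵐᵒᵖ carrier

attribute [instance] FDObj.acg FDObj.modR FDObj.modA

variable {A R φ}

/-- The right `A`-linear dual of an object `P` of `𝒜_R`. -/
abbrev FDObj.dual (P : FDObj A R φ) : Type u := P.carrier →ₗ[Aᵐᵒᵖ] A

/-- Composition of a dual element with a right `R`-linear map, `q* ↦ q* ∘ t`. -/
def FDObj.compDual {P Q : FDObj A R φ} (t : P.carrier →ₗ[Rᵐᵒᵖ] Q.carrier)
    (g : Q.dual) : P.dual where
  toFun := fun p => g (t p)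
  map_add' := by intro p q; simp
  map_smul' := by
    intro a p
    simp only [RingHom.id_apply]
    rw [P.compat a p, map_smul, ← Q.compat a (t p), map_smul]

variable (A R φ)

/-- Generators of the finite dual: triples `(P, p*, p)`. -/
def FDGen : Type (u + 1) := Σ P : FDObj A R φ, P.dual × P.carrier

/-- The relations defining the finite dual coring `R°`: additivity in each tensor slot
(yielding the tensor products `P* ⊗_{T_P} P`) together with the relations
`q* ⊗ t·p − q*·t ⊗ p` for right `R`-linear maps `t : P → Q`. -/
def FDRel : Set (FreeAbelianGroup (FDGen A R φ)) :=
  { x | (∃ (P : FDObj A R φ) (f g : P.dual) (p : P.carrier),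
          x = FreeAbelianGroup.of ⟨P, (f + g, p)⟩
              - FreeAbelianGroup.of ⟨P, (f, p)⟩ - FreeAbelianGroup.of ⟨P, (g, p)⟩) ∨
        (∃ (P : FDObj A R φ) (f : P.dual) (p q : P.carrier),
          x = FreeAbelianGroup.of ⟨P, (f, p + q)⟩
              - FreeAbelianGroup.of ⟨P, (f, p)⟩ - FreeAbelianGroup.of ⟨P, (f, q)⟩) ∨
        (∃ (P Q : FDObj A R φ) (t : P.carrier →ₗ[Rᵐᵒᵖ] Q.carrier)
            (g : Q.dual) (p : P.carrier),
          x = FreeAbelianGroup.of ⟨Q, (g, t p)⟩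
              - FreeAbelianGroup.of ⟨P, (FDObj.compDual t g, p)⟩) }

/-- The right finite dual `R°` of the ring extension `φ : A → R`, as an abelian group. -/
def FinDual : Type (u + 1) :=
  FreeAbelianGroup (FDGen A R φ) ⧸ AddSubgroup.closure (FDRel A R φ)

noncomputable instance : AddCommGroup (FinDual A R φ) :=
  QuotientAddGroup.Quotient.addCommGroup _

/-- The right `A`-linear dual `R* = Hom_A(R, A)` of `R` (as a right `A`-module via `φ`),
realized as the additive subgroup of `R →+ A` of right `A`-linear maps. -/
def RStar : AddSubgroup (R →+ A) where
  carrier := { f | ∀ (r : R) (a : A), f (r * φ a) = f r * a }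
  add_mem' := by
    intro f g hf hg r a
    simp [hf r a, hg r a, add_mul]
  zero_mem' := by intro r a; simp
  neg_mem' := by
    intro f hf r a
    simp [hf r a, neg_mul]

/-- The functional `ζ(p* ⊗ p) : r ↦ p*(p·r)` attached to a generator. -/
def zetaGen (g : FDGen A R φ) : R →+ A where
  toFun := fun r => g.2.1 ((op r : Rᵐᵒᵖ) • g.2.2)
  map_zero' := by simp
  map_add' := by
    intro r s
    show g.2.1 ((op (r + s) : Rᵐᵒᵖ) • g.2.2) = _
    rw [op_add, add_smul, map_add]

lemma zetaGen_mem (g : FDGen A R φ) : zetaGen A R φ g ∈ RStar A R φ := by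
  intro r a
  have h1 : (op (r * φ a) : Rᵐᵒᵖ) = (RingHom.op φ (op a)) * op r := rfl
  have h2 : ((RingHom.op φ (op a)) * op r) • g.2.2
      = (RingHom.op φ (op a)) • ((op r : Rᵐᵒᵖ) • g.2.2) := mul_smul _ _ _
  have h3 : (RingHom.op φ (op a)) • ((op r : Rᵐᵒᵖ) • g.2.2)
      = (op a : Aᵐᵒᵖ) • ((op r : Rᵐᵒᵖ) • g.2.2) := (g.1.compat (op a) _).symm
  show g.2.1 ((op (r * φ a) : Rᵐᵒᵖ) • g.2.2) = g.2.1 ((op r : Rᵐᵒᵖ) • g.2.2) * a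
  rw [h1, h2, h3, map_smul]
  rfl

/-- `ζ` on the free abelian group on generators. -/
noncomputable def zetaHat : FreeAbelianGroup (FDGen A R φ) →+ ↥(RStar A R φ) :=
  FreeAbelianGroup.lift (fun g => ⟨zetaGen A R φ g, zetaGen_mem A R φ g⟩)

lemma FDRel_le_ker : AddSubgroup.closure (FDRel A R φ) ≤ (zetaHat A R φ).ker := by
  rw [AddSubgroup.closure_le]
  rintro x hx
  simp only [SetLike.mem_coe, AddMonoidHom.mem_ker]
  obtain (⟨P, f, g, p, rfl⟩ | ⟨P, f, p, q, rfl⟩ | ⟨P, Q, t, g, p, rfl⟩) := hx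
  · rw [map_sub, map_sub, sub_sub, sub_eq_zero]
    apply Subtype.ext; apply AddMonoidHom.ext; intro r
    simp only [zetaHat]
    erw [FreeAbelianGroup.lift_apply_of, FreeAbelianGroup.lift_apply_of]
    try erw [FreeAbelianGroup.lift_apply_of]
    simp only [zetaHat, FreeAbelianGroup.lift_apply_of, AddSubgroup.coe_add,
      AddMonoidHom.add_apply, zetaGen, AddMonoidHom.coe_mk, ZeroHom.coe_mk,
      LinearMap.add_apply]
    rfl
  · rw [map_sub, map_sub, sub_sub, sub_eq_zero]
    apply Subtype.ext; apply AddMonoidHom.ext; intro r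
    simp only [zetaHat]
    erw [FreeAbelianGroup.lift_apply_of, FreeAbelianGroup.lift_apply_of]
    try erw [FreeAbelianGroup.lift_apply_of]
    simp only [zetaHat, FreeAbelianGroup.lift_apply_of, AddSubgroup.coe_add,
      AddMonoidHom.add_apply, zetaGen, AddMonoidHom.coe_mk, ZeroHom.coe_mk,
      smul_add, map_add]
    exact map_add f _ _
  · rw [map_sub, sub_eq_zero]
    apply Subtype.ext; apply AddMonoidHom.ext; intro r
    simp only [zetaHat]
    erw [FreeAbelianGroup.lift_apply_of, FreeAbelianGroup.lift_apply_of]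
    try erw [FreeAbelianGroup.lift_apply_of]
    simp only [zetaHat, FreeAbelianGroup.lift_apply_of, zetaGen, AddMonoidHom.coe_mk,
      ZeroHom.coe_mk, FDObj.compDual, LinearMap.coe_mk, AddHom.coe_mk]
    exact congrArg g (t.map_smul (MulOpposite.op r) p).symm

/-- The canonical map `ζ : R° → R*`. -/
noncomputable def zeta : FinDual A R φ →+ ↥(RStar A R φ) :=
  QuotientAddGroup.lift _ (zetaHat A R φ) (FDRel_le_ker A R φ)




/-! ### Auxiliary results on hereditary rings -/

section Hereditary

variable {B : Type u} [Ring B]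

theorem aux_projective_prod {M N : Type v} [AddCommMonoid M] [AddCommMonoid N]
    [Module B M] [Module B N] [Module.Projective B M] [Module.Projective B N] :
    Module.Projective B (M × N) := by
  obtain ⟨sM, hsM⟩ := (inferInstance : Module.Projective B M).out
  obtain ⟨sN, hsN⟩ := (inferInstance : Module.Projective B N).out
  exact Module.Projective.of_split (M := (M →₀ B) × (N →₀ B))
    (LinearMap.prodMap sM sN)
    (LinearMap.prodMap (Finsupp.linearCombination B _root_.id)
      (Finsupp.linearCombination B _root_.id))
    (LinearMap.ext fun x => Prod.ext (hsM x.1) (hsN x.2))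

/-- The linear map `(Fin n → B) → (Fin (n+1) → B)` prepending a zero. -/
def auxConsLinear (n : ℕ) : (Fin n → B) →ₗ[B] (Fin (n + 1) → B) where
  toFun f := Fin.cons 0 f
  map_add' f g := funext fun i => Fin.cases (by simp) (fun j => by simp) i
  map_smul' c f := funext fun i => Fin.cases (by simp) (fun j => by simp) i

set_option synthInstance.maxHeartbeats 1000000 in
set_option maxHeartbeats 1000000 in
theorem aux_projective_submodule_pi
    (hB : ∀ I : Submodule B B, Module.Projective B ↥I) :
    ∀ (n : ℕ) (N : Submodule B (Fin n → B)), Module.Projective B ↥N := by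
  intro n
  induction n with
  | zero =>
    intro N
    haveI : Subsingleton ↥N := ⟨fun a b => Subtype.ext (funext fun i => i.elim0)⟩
    exact Module.Projective.of_split (M := B) 0 0
      (LinearMap.ext fun x => Subsingleton.elim _ _)
  | succ n IH =>
    intro N
    let q : ↥N →ₗ[B] B := (LinearMap.proj 0).comp N.subtype
    haveI hI : Module.Projective B ↥(LinearMap.range q) := hB _
    obtain ⟨s, hs⟩ := Module.projective_lifting_property q.rangeRestrict LinearMap.id
      q.surjective_rangeRestrict
    have hs' : ∀ y, q.rangeRestrict (s y) = y := fun y => LinearMap.congr_fun hs y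
    let K : Submodule B ↥N := LinearMap.ker q.rangeRestrict
    -- `K` is isomorphic to a submodule of `Fin n → B`
    let N' : Submodule B (Fin n → B) := N.comap (auxConsLinear n)
    let toK : ↥N' →ₗ[B] ↥K :=
      { toFun := fun x => ⟨⟨auxConsLinear n x.1, x.2⟩,
          LinearMap.mem_ker.mpr (by
            apply Subtype.ext
            show ((auxConsLinear n) (x.1 : Fin n → B)) 0 = (0 : B)
            exact Fin.cons_zero (α := fun _ => B) 0 x.1)⟩
        map_add' := fun a b => Subtype.ext (Subtype.ext (map_add (auxConsLinear n) _ _))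
        map_smul' := fun c a => Subtype.ext (Subtype.ext (map_smul (auxConsLinear n) c _)) }
    have hK0 : ∀ y : ↥K, (y.1.1 : Fin (n + 1) → B) 0 = 0 := by
      intro y
      have h := congrArg Subtype.val (LinearMap.mem_ker.mp y.2)
      exact h
    have hcons : ∀ y : ↥K, auxConsLinear n (Fin.tail y.1.1) = y.1.1 := by
      intro y
      funext i
      refine Fin.cases ?_ (fun j => ?_) i
      · simpa [auxConsLinear] using (hK0 y).symm
      · simp [auxConsLinear, Fin.tail]
    let fromK : ↥K →ₗ[B] ↥N' :=
      { toFun := fun y => ⟨Fin.tail y.1.1, show auxConsLinear n (Fin.tail y.1.1) ∈ N from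
          (hcons y).symm ▸ y.1.2⟩
        map_add' := fun a b => rfl
        map_smul' := fun c a => rfl }
    have eK : ↥N' ≃ₗ[B] ↥K := LinearEquiv.ofLinear toK fromK
      (LinearMap.ext fun y => Subtype.ext (Subtype.ext (hcons y)))
      (LinearMap.ext fun x => Subtype.ext (by
        show Fin.tail (α := fun _ => B) ((auxConsLinear n) (x.1 : Fin n → B)) =
          (x.1 : Fin n → B)
        exact Fin.tail_cons (α := fun _ => B) 0 x.1))
    haveI hKproj : Module.Projective B ↥K := Module.Projective.of_equiv eK
    haveI : Module.Projective B (↥K × ↥(LinearMap.range q)) := aux_projective_prod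
    -- split `N` as `K × range q`
    let d : ↥N →ₗ[B] ↥N := LinearMap.id - s.comp q.rangeRestrict
    have hd : ∀ x, d x ∈ K := by
      intro x
      refine LinearMap.mem_ker.mpr ?_
      have h : q.rangeRestrict (d x) =
          q.rangeRestrict x - q.rangeRestrict (s (q.rangeRestrict x)) := by
        simp [d, map_sub]
      rw [h, hs' (q.rangeRestrict x), sub_self]
    let i : ↥N →ₗ[B] ↥K × ↥(LinearMap.range q) :=
      (LinearMap.codRestrict K d hd).prod q.rangeRestrict
    let s2 : ↥K × ↥(LinearMap.range q) →ₗ[B] ↥N :=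
      K.subtype.comp (LinearMap.fst B _ _) + s.comp (LinearMap.snd B _ _)
    refine Module.Projective.of_split i s2 (LinearMap.ext fun x => ?_)
    show (x - s (q.rangeRestrict x)) + s (q.rangeRestrict x) = x
    exact sub_add_cancel x _

theorem aux_projective_submodule {M : Type u} [AddCommGroup M] [Module B M]
    [Module.Finite B M] [Module.Projective B M]
    (hB : ∀ I : Submodule B B, Module.Projective B ↥I) (N : Submodule B M) :
    Module.Projective B ↥N := by
  obtain ⟨n, π, hπ⟩ := Module.Finite.exists_fin' B M
  obtain ⟨σ, hσ⟩ := Module.projective_lifting_property π LinearMap.id hπ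
  have hσ' : ∀ x, π (σ x) = x := fun x => LinearMap.congr_fun hσ x
  have hinj : Function.Injective σ := fun a b hab => by
    rw [← hσ' a, ← hσ' b, hab]
  haveI := aux_projective_submodule_pi hB n (N.map σ)
  exact Module.Projective.of_equiv (Submodule.equivMapOfInjective σ hinj N).symm

end Hereditary

/-! ### Relations in the finite dual -/

/-- The quotient map onto the finite dual. -/
noncomputable def fdmk : FreeAbelianGroup (FDGen A R φ) →+ FinDual A R φ :=
  QuotientAddGroup.mk' (AddSubgroup.closure (FDRel A R φ))

theorem fdmk_surjective : Function.Surjective (fdmk A R φ) :=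
  QuotientAddGroup.mk'_surjective _

theorem fdmk_eq_of_rel {x y : FreeAbelianGroup (FDGen A R φ)}
    (h : x - y ∈ AddSubgroup.closure (FDRel A R φ)) :
    fdmk A R φ x = fdmk A R φ y := by
  have h2 : fdmk A R φ (x - y) = 0 := (QuotientAddGroup.eq_zero_iff (x - y)).mpr h
  rw [map_sub, sub_eq_zero] at h2
  exact h2

theorem fdmk_relL (P : FDObj A R φ) (f g : P.dual) (p : P.carrier) :
    fdmk A R φ (FreeAbelianGroup.of ⟨P, (f + g, p)⟩) =
      fdmk A R φ (FreeAbelianGroup.of ⟨P, (f, p)⟩) +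
        fdmk A R φ (FreeAbelianGroup.of ⟨P, (g, p)⟩) := by
  rw [← map_add]
  apply fdmk_eq_of_rel
  apply AddSubgroup.subset_closure
  exact Or.inl ⟨P, f, g, p, by rw [sub_sub]⟩

theorem fdmk_relT (P Q : FDObj A R φ) (t : P.carrier →ₗ[Rᵐᵒᵖ] Q.carrier)
    (g : Q.dual) (p : P.carrier) :
    fdmk A R φ (FreeAbelianGroup.of ⟨Q, (g, t p)⟩) =
      fdmk A R φ (FreeAbelianGroup.of ⟨P, (FDObj.compDual t g, p)⟩) := by
  apply fdmk_eq_of_rel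
  apply AddSubgroup.subset_closure
  exact Or.inr (Or.inr ⟨P, Q, t, g, p, rfl⟩)

theorem fdmk_zero (P : FDObj A R φ) (p : P.carrier) :
    fdmk A R φ (FreeAbelianGroup.of ⟨P, (0, p)⟩) = 0 := by
  have h := fdmk_relL A R φ P 0 0 p
  rw [add_zero] at h
  exact left_eq_add.mp h

theorem fdmk_neg (P : FDObj A R φ) (f : P.dual) (p : P.carrier) :
    fdmk A R φ (FreeAbelianGroup.of ⟨P, (-f, p)⟩) =
      -fdmk A R φ (FreeAbelianGroup.of ⟨P, (f, p)⟩) := by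
  have h := fdmk_relL A R φ P f (-f) p
  rw [add_neg_cancel, fdmk_zero] at h
  exact eq_neg_of_add_eq_zero_right h.symm

/-- The product of two objects of `𝒜_R`. -/
def FDObj.prodObj (P Q : FDObj A R φ) : FDObj A R φ where
  carrier := P.carrier × Q.carrier
  compat a x := Prod.ext (P.compat a x.1) (Q.compat a x.2)
  fin := by haveI := P.fin; haveI := Q.fin; exact Module.Finite.prod
  proj := by haveI := P.proj; haveI := Q.proj; exact aux_projective_prod

/-- The zero object of `𝒜_R`. -/
def FDObj.punitObj : FDObj A R φ where
  carrier := PUnit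
  compat a x := Subsingleton.elim _ _
  fin := inferInstance
  proj := Module.Projective.of_split (M := Aᵐᵒᵖ) 0 0
    (LinearMap.ext fun x => Subsingleton.elim _ _)

/-- Every element of the finite dual is the class of a single generator. -/
theorem fdmk_exists_single (x : FreeAbelianGroup (FDGen A R φ)) :
    ∃ (P : FDObj A R φ) (f : P.dual) (p : P.carrier),
      fdmk A R φ x = fdmk A R φ (FreeAbelianGroup.of ⟨P, (f, p)⟩) := by
  refine FreeAbelianGroup.induction_on x ?_ ?_ ?_ ?_
  · refine ⟨FDObj.punitObj A R φ, 0, 0, ?_⟩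
    rw [map_zero, fdmk_zero]
  · rintro ⟨P, f, p⟩
    exact ⟨P, f, p, rfl⟩
  · rintro ⟨P, f, p⟩ -
    refine ⟨P, -f, p, ?_⟩
    rw [map_neg, fdmk_neg]
  · rintro x y ⟨P, f, p, hx⟩ ⟨Q, g, q, hy⟩
    let PQ := FDObj.prodObj A R φ P Q
    let t1 : PQ.carrier →ₗ[Rᵐᵒᵖ] P.carrier := LinearMap.fst Rᵐᵒᵖ P.carrier Q.carrier
    let t2 : PQ.carrier →ₗ[Rᵐᵒᵖ] Q.carrier := LinearMap.snd Rᵐᵒᵖ P.carrier Q.carrier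
    have e1 : fdmk A R φ (FreeAbelianGroup.of ⟨P, (f, p)⟩) =
        fdmk A R φ (FreeAbelianGroup.of ⟨PQ, (FDObj.compDual t1 f, (p, q))⟩) :=
      fdmk_relT A R φ PQ P t1 f (p, q)
    have e2 : fdmk A R φ (FreeAbelianGroup.of ⟨Q, (g, q)⟩) =
        fdmk A R φ (FreeAbelianGroup.of ⟨PQ, (FDObj.compDual t2 g, (p, q))⟩) :=
      fdmk_relT A R φ PQ Q t2 g (p, q)
    refine ⟨PQ, FDObj.compDual t1 f + FDObj.compDual t2 g, (p, q), ?_⟩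
    rw [map_add, hx, hy, e1, e2]
    exact (fdmk_relL A R φ PQ _ _ _).symm

theorem zeta_fdmk_of (g : FDGen A R φ) :
    ((zeta A R φ (fdmk A R φ (FreeAbelianGroup.of g)) : ↥(RStar A R φ)) : R →+ A) =
      zetaGen A R φ g := by
  have h1 : zeta A R φ (fdmk A R φ (FreeAbelianGroup.of g)) =
      zetaHat A R φ (FreeAbelianGroup.of g) :=
    QuotientAddGroup.lift_mk' _ _ _
  rw [h1]
  simp only [zetaHat]
  erw [FreeAbelianGroup.lift_apply_of]

/-! ### The cyclic subobject generated by an element -/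

/-- The cyclic right `R`-submodule generated by `p`. -/
def spanSub (P : FDObj A R φ) (p : P.carrier) : Submodule Rᵐᵒᵖ P.carrier :=
  Submodule.span Rᵐᵒᵖ {p}

/-- The same set, as a right `A`-submodule. -/
def spanSubA (P : FDObj A R φ) (p : P.carrier) : Submodule Aᵐᵒᵖ P.carrier where
  carrier := spanSub A R φ P p
  add_mem' := fun h1 h2 => (spanSub A R φ P p).add_mem h1 h2
  zero_mem' := (spanSub A R φ P p).zero_mem
  smul_mem' := fun a x hx => by
    show a • x ∈ spanSub A R φ P p
    rw [P.compat a x]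
    exact (spanSub A R φ P p).smul_mem _ hx

/-- The cyclic subobject of `P` generated by `p`, given that it is finitely
generated and projective over `A`. -/
noncomputable def spanObj (P : FDObj A R φ) (p : P.carrier)
    (hfin : Module.Finite Aᵐᵒᵖ ↥(spanSubA A R φ P p))
    (hproj : Module.Projective Aᵐᵒᵖ ↥(spanSubA A R φ P p)) : FDObj A R φ :=
  letI modAD : Module Aᵐᵒᵖ ↥(spanSub A R φ P p) := Module.compHom _ (RingHom.op φ)
  letI e : ↥(spanSub A R φ P p) ≃ₗ[Aᵐᵒᵖ] ↥(spanSubA A R φ P p) :=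
    { toFun := fun x => ⟨x.1, x.2⟩
      invFun := fun x => ⟨x.1, x.2⟩
      left_inv := fun x => rfl
      right_inv := fun x => rfl
      map_add' := fun x y => rfl
      map_smul' := fun a x => by
        apply Subtype.ext
        show (RingHom.op φ) a • (x : P.carrier) = a • (x : P.carrier)
        exact (P.compat a (x : P.carrier)).symm }
  { carrier := ↥(spanSub A R φ P p)
    modA := modAD
    compat := fun a x => rfl
    fin := by haveI := hfin; exact Module.Finite.equiv e.symm
    proj := by haveI := hproj; exact Module.Projective.of_equiv e.symm }

/-- If `A` is a right hereditary, right noetherian ring (every right ideal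
of `A` is projective as a right `A`-module, and `A` is noetherian as a right module over
itself) and `A → R` a ring homomorphism, then the canonical map `ζ : R° → R*` from the
finite dual coring to the right dual of `R` is injective. -/
theorem zeta_injective_of_right_hereditary_noetherian
    (A R : Type u) [Ring A] [Ring R] (φ : A →+* R)
    (hhered : ∀ I : Submodule Aᵐᵒᵖ A, Module.Projective Aᵐᵒᵖ ↥I)
    (hnoeth : IsNoetherian Aᵐᵒᵖ A) :
    Function.Injective (zeta A R φ) := by
  rw [injective_iff_map_eq_zero]
  intro x hx
  obtain ⟨y, rfl⟩ := fdmk_surjective A R φ x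
  obtain ⟨P, f, p, hy⟩ := fdmk_exists_single A R φ y
  rw [hy] at hx ⊢
  -- the vanishing condition
  have hz : ∀ r : R, f ((op r : Rᵐᵒᵖ) • p) = 0 := by
    intro r
    have h1 := zeta_fdmk_of A R φ ⟨P, (f, p)⟩
    rw [hx] at h1
    have h2 := DFunLike.congr_fun h1.symm r
    simpa [zetaGen] using h2
  -- noetherianity
  have eA : A ≃ₗ[Aᵐᵒᵖ] Aᵐᵒᵖ :=
    { toFun := op
      invFun := unop
      left_inv := fun a => rfl
      right_inv := fun a => rfl
      map_add' := fun a b => rfl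
      map_smul' := fun r a => rfl }
  haveI : IsNoetherianRing Aᵐᵒᵖ := isNoetherian_of_linearEquiv eA
  haveI := P.fin
  haveI := P.proj
  haveI : IsNoetherian Aᵐᵒᵖ P.carrier :=
    isNoetherian_of_isNoetherianRing_of_finite Aᵐᵒᵖ P.carrier
  haveI hfin : Module.Finite Aᵐᵒᵖ ↥(spanSubA A R φ P p) :=
    Module.Finite.iff_fg.mpr (IsNoetherian.noetherian (spanSubA A R φ P p))
  -- projectivity of ideals of `Aᵐᵒᵖ`
  have hAop : ∀ I : Submodule Aᵐᵒᵖ Aᵐᵒᵖ, Module.Projective Aᵐᵒᵖ ↥I := by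
    intro I
    haveI := hhered (Submodule.map (eA.symm : Aᵐᵒᵖ →ₗ[Aᵐᵒᵖ] A) I)
    exact Module.Projective.of_equiv (eA.symm.submoduleMap I).symm
  haveI hproj : Module.Projective Aᵐᵒᵖ ↥(spanSubA A R φ P p) :=
    aux_projective_submodule hAop (spanSubA A R φ P p)
  -- the cyclic subobject
  let ND : FDObj A R φ := spanObj A R φ P p hfin hproj
  let t : ND.carrier →ₗ[Rᵐᵒᵖ] P.carrier := (spanSub A R φ P p).subtype
  let pd : ND.carrier := ⟨p, Submodule.mem_span_singleton_self p⟩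
  have e3 : fdmk A R φ (FreeAbelianGroup.of ⟨P, (f, p)⟩) =
      fdmk A R φ (FreeAbelianGroup.of
        ⟨ND, (FDObj.compDual (P := ND) (Q := P) t f, pd)⟩) :=
    fdmk_relT A R φ ND P t f pd
  have hcd : (FDObj.compDual (P := ND) (Q := P) t f) = 0 := by
    apply LinearMap.ext
    intro d
    show f (t d) = 0
    have hd : t d ∈ spanSub A R φ P p := Subtype.prop (show ↥(spanSub A R φ P p) from d)
    obtain ⟨r, hr⟩ := Submodule.mem_span_singleton.mp hd
    rw [← hr]
    have h4 := hz (unop r)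
    rwa [op_unop] at h4
  rw [e3, hcd]
  exact fdmk_zero A R φ ND pd
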